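/- Let K be a field, A a K-algebra equipped with augmentations (K-algebra homomorphisms) ρ_1, …, ρ_n : A → K, and B ⊆ A a subalgebra with 1_B = 1_A. Write B_i^+ = ker(ρ_i) ∩ B. If B ⊆ A has right depth 2, then A·B_i^+ ⊆ B_i^+·A for each i = 1, …, n; if B ⊆ A has left depth 2, then B_i^+·A ⊆ A·B_i^+ for each i = 1, …, n. -/

import Mathlib

/-! # Depth of subring extensions (Kadison–Young)
For a unital subring `B ⊆ A`, `CC B n` realizes the `n`-fold relative tensor power
`C_n(A,B) = A ⊗_B ⋯ ⊗_B A` (with `C_0(A,B) = B`) as a quotient of the iterated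
tensor power over `ℤ` by the middle `B`-balancing relations, together with its
natural left/right `A`- and `B`-actions.  Bimodule maps, the divisibility relation
`M ∣ q ⬝ N`, H-equivalence, the depth conditions and the minimum depth `d(B,A) ∈ ℕ∞`
are then defined exactly as in the paper. -/

open TensorProduct

universe u

variable (A : Type u) [Ring A]

/-- `Tpow A n` is the `(n+1)`-fold tensor power `A ⊗ℤ ⋯ ⊗ℤ A`. -/
noncomputable def Tpow : ℕ → ModuleCat.{u} ℤ
  | 0 => ModuleCat.of ℤ A
  | n + 1 => ModuleCat.of ℤ (A ⊗[ℤ] (Tpow n : Type u))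

/-- Multiplication by `a : A` on the leftmost tensor factor. -/
noncomputable def lmulT (a : A) : ∀ n, (Tpow A n : Type u) →ₗ[ℤ] (Tpow A n : Type u)
  | 0 => (LinearMap.mulLeft ℤ a : A →ₗ[ℤ] A)
  | n + 1 => LinearMap.rTensor (Tpow A n : Type u) (LinearMap.mulLeft ℤ a)

/-- Multiplication by `a : A` on the rightmost tensor factor. -/
noncomputable def rmulT (a : A) : ∀ n, (Tpow A n : Type u) →ₗ[ℤ] (Tpow A n : Type u)
  | 0 => (LinearMap.mulRight ℤ a : A →ₗ[ℤ] A)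
  | n + 1 => LinearMap.lTensor A (rmulT a n)

private theorem lmulT_succ_apply (a : A) (n : ℕ) (x : A ⊗[ℤ] (Tpow A n : Type u)) :
    lmulT A a (n+1) x = LinearMap.rTensor (Tpow A n : Type u) (LinearMap.mulLeft ℤ a) x := rfl

private theorem rmulT_succ_apply (a : A) (n : ℕ) (x : A ⊗[ℤ] (Tpow A n : Type u)) :
    rmulT A a (n+1) x = LinearMap.lTensor A (rmulT A a n) x := rfl

private theorem auxcomm (M : Type u) [AddCommGroup M] [Module ℤ M] (a : A) (g : M →ₗ[ℤ] M)
    (x : A ⊗[ℤ] M) :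
    (LinearMap.rTensor M (LinearMap.mulLeft ℤ a)) ((LinearMap.lTensor A g) x) =
    (LinearMap.lTensor A g) ((LinearMap.rTensor M (LinearMap.mulLeft ℤ a)) x) := by
  induction x using TensorProduct.induction_on with
  | zero => simp
  | tmul c t => simp
  | add y z hy hz => simp only [map_add, hy, hz]

theorem lmulT_rmulT_comm (a b : A) : ∀ (n : ℕ) (x : (Tpow A n : Type u)),
    lmulT A a n (rmulT A b n x) = rmulT A b n (lmulT A a n x)
  | 0, x => (mul_assoc a x b).symm
  | n + 1, x => by
    show (lmulT A a (n+1)) ((rmulT A b (n+1)) x) = (rmulT A b (n+1)) ((lmulT A a (n+1)) x)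
    rw [lmulT, rmulT]
    exact auxcomm A (Tpow A n : Type u) a (rmulT A b n) x

private theorem aux1 (M : Type u) [AddCommGroup M] [Module ℤ M] (a c d : A) (t s : M) :
    LinearMap.rTensor M (LinearMap.mulLeft ℤ a) (c ⊗ₜ[ℤ] t - d ⊗ₜ[ℤ] s) =
      (a * c) ⊗ₜ[ℤ] t - (a * d) ⊗ₜ[ℤ] s := by simp

private theorem aux2 (M : Type u) [AddCommGroup M] [Module ℤ M] (g : M →ₗ[ℤ] M) (c d : A)
    (t s : M) :
    LinearMap.lTensor A g (c ⊗ₜ[ℤ] t - d ⊗ₜ[ℤ] s) = c ⊗ₜ[ℤ] (g t) - d ⊗ₜ[ℤ] (g s) := by simp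

private theorem aux3 (M : Type u) [AddCommGroup M] [Module ℤ M] (a c : A) (t : M) :
    LinearMap.rTensor M (LinearMap.mulLeft ℤ a) (c ⊗ₜ[ℤ] t) = (a * c) ⊗ₜ[ℤ] t := by simp

private theorem aux4 (M : Type u) [AddCommGroup M] [Module ℤ M] (g : M →ₗ[ℤ] M) (c : A) (t : M) :
    LinearMap.lTensor A g (c ⊗ₜ[ℤ] t) = c ⊗ₜ[ℤ] (g t) := by simp


variable {A}

/-- The `B`-balancing relations inside `Tpow A n`. -/
noncomputable def rel (B : Subring A) : ∀ n, Submodule ℤ (Tpow A n : Type u)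
  | 0 => ⊥
  | n + 1 =>
      Submodule.span ℤ
        {x : (Tpow A (n+1) : Type u) |
          (∃ (a : A) (b : B) (t : (Tpow A n : Type u)),
            x = ((a * (b : A)) ⊗ₜ[ℤ] t : A ⊗[ℤ] (Tpow A n : Type u)) -
                 a ⊗ₜ[ℤ] (lmulT A (b : A) n t)) ∨
          (∃ (a : A) (r : (Tpow A n : Type u)), r ∈ rel B n ∧
            x = (a ⊗ₜ[ℤ] r : A ⊗[ℤ] (Tpow A n : Type u)))}

theorem rel_succ (B : Subring A) (n : ℕ) :
    rel B (n+1) =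
      Submodule.span ℤ
        {x : (Tpow A (n+1) : Type u) |
          (∃ (a : A) (b : B) (t : (Tpow A n : Type u)),
            x = ((a * (b : A)) ⊗ₜ[ℤ] t : A ⊗[ℤ] (Tpow A n : Type u)) -
                 a ⊗ₜ[ℤ] (lmulT A (b : A) n t)) ∨
          (∃ (a : A) (r : (Tpow A n : Type u)), r ∈ rel B n ∧
            x = (a ⊗ₜ[ℤ] r : A ⊗[ℤ] (Tpow A n : Type u)))} := rfl

theorem rel_le_comap_lmulT (B : Subring A) (a : A) :
    ∀ n, rel B n ≤ (rel B n).comap (lmulT A a n)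
  | 0 => bot_le
  | n + 1 => by
    rw [rel_succ, Submodule.span_le]
    rintro x (⟨a', b, t, hx⟩ | ⟨a', r, hr, hx⟩) <;>
      show lmulT A a (n+1) x ∈ rel B (n+1) <;> subst hx <;> rw [lmulT_succ_apply]
    · rw [map_sub, LinearMap.rTensor_tmul, LinearMap.rTensor_tmul, LinearMap.mulLeft_apply,
        LinearMap.mulLeft_apply]
      refine Submodule.subset_span (Or.inl ⟨a * a', b, t, ?_⟩)
      rw [mul_assoc]
    · rw [LinearMap.rTensor_tmul, LinearMap.mulLeft_apply]
      exact Submodule.subset_span (Or.inr ⟨a * a', r, hr, rfl⟩)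

theorem rel_le_comap_rmulT (B : Subring A) (a : A) :
    ∀ n, rel B n ≤ (rel B n).comap (rmulT A a n)
  | 0 => bot_le
  | n + 1 => by
    rw [rel_succ, Submodule.span_le]
    rintro x (⟨a', b, t, hx⟩ | ⟨a', r, hr, hx⟩) <;>
      show rmulT A a (n+1) x ∈ rel B (n+1) <;> subst hx <;> rw [rmulT_succ_apply]
    · rw [map_sub, LinearMap.lTensor_tmul, LinearMap.lTensor_tmul, ← lmulT_rmulT_comm]
      exact Submodule.subset_span (Or.inl ⟨a', b, rmulT A a n t, rfl⟩)
    · rw [LinearMap.lTensor_tmul]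
      exact Submodule.subset_span
        (Or.inr ⟨a', rmulT A a n r, rel_le_comap_rmulT B a n hr, rfl⟩)

/-- `CC B n` is `C_n(A,B) = A ⊗_B ⋯ ⊗_B A` (`n` factors of `A`), with `CC B 0 = B`. -/
noncomputable def CC (B : Subring A) : ℕ → ModuleCat.{u} ℤ
  | 0 => ModuleCat.of ℤ B
  | n + 1 => ModuleCat.of ℤ ((Tpow A n : Type u) ⧸ rel B n)

/-- The left `A`-action on `C_{n+1}(A,B)`. -/
noncomputable def lA (B : Subring A) (a : A) (n : ℕ) :
    (CC B (n+1) : Type u) →ₗ[ℤ] (CC B (n+1) : Type u) :=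
  show ((Tpow A n : Type u) ⧸ rel B n) →ₗ[ℤ] ((Tpow A n : Type u) ⧸ rel B n) from
    Submodule.mapQ _ _ (lmulT A a n) (rel_le_comap_lmulT B a n)

/-- The right `A`-action on `C_{n+1}(A,B)`. -/
noncomputable def rA (B : Subring A) (a : A) (n : ℕ) :
    (CC B (n+1) : Type u) →ₗ[ℤ] (CC B (n+1) : Type u) :=
  show ((Tpow A n : Type u) ⧸ rel B n) →ₗ[ℤ] ((Tpow A n : Type u) ⧸ rel B n) from
    Submodule.mapQ _ _ (rmulT A a n) (rel_le_comap_rmulT B a n)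

/-- The left `B`-action on `C_n(A,B)`. -/
noncomputable def lB (B : Subring A) (b : B) : ∀ n, (CC B n : Type u) →ₗ[ℤ] (CC B n : Type u)
  | 0 => (LinearMap.mulLeft ℤ b : B →ₗ[ℤ] B)
  | n + 1 => lA B (b : A) n

/-- The right `B`-action on `C_n(A,B)`. -/
noncomputable def rB (B : Subring A) (b : B) : ∀ n, (CC B n : Type u) →ₗ[ℤ] (CC B n : Type u)
  | 0 => (LinearMap.mulRight ℤ b : B →ₗ[ℤ] B)
  | n + 1 => rA B (b : A) n

/-- `f` is a morphism of `B`-`B`-bimodules `C_m(A,B) → C_n(A,B)`. -/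
def IsBBHom (B : Subring A) {m n : ℕ} (f : (CC B m : Type u) →ₗ[ℤ] (CC B n : Type u)) : Prop :=
  ∀ b : B, (∀ x, f (lB B b m x) = lB B b n (f x)) ∧ (∀ x, f (rB B b m x) = rB B b n (f x))

/-- `f` is a morphism of `A`-`B`-bimodules `C_{m+1}(A,B) → C_{n+1}(A,B)`. -/
def IsABHom (B : Subring A) {m n : ℕ}
    (f : (CC B (m+1) : Type u) →ₗ[ℤ] (CC B (n+1) : Type u)) : Prop :=
  (∀ (a : A) x, f (lA B a m x) = lA B a n (f x)) ∧
  (∀ (b : B) x, f (rB B b (m+1) x) = rB B b (n+1) (f x))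

/-- `f` is a morphism of `B`-`A`-bimodules `C_{m+1}(A,B) → C_{n+1}(A,B)`. -/
def IsBAHom (B : Subring A) {m n : ℕ}
    (f : (CC B (m+1) : Type u) →ₗ[ℤ] (CC B (n+1) : Type u)) : Prop :=
  (∀ (b : B) x, f (lB B b (m+1) x) = lB B b (n+1) (f x)) ∧
  (∀ (a : A) x, f (rA B a m x) = rA B a n (f x))

/-- `C_m(A,B)` divides a multiple of `C_n(A,B)` as `B`-`B`-bimodules. -/
def DividesBB (B : Subring A) (m n : ℕ) : Prop :=
  ∃ (r : ℕ) (f : Fin r → ((CC B m : Type u) →ₗ[ℤ] (CC B n : Type u)))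
    (g : Fin r → ((CC B n : Type u) →ₗ[ℤ] (CC B m : Type u))),
    (∀ i, IsBBHom B (f i)) ∧ (∀ i, IsBBHom B (g i)) ∧
      ∑ i, (g i).comp (f i) = LinearMap.id

/-- `C_{m+1}(A,B)` divides a multiple of `C_{n+1}(A,B)` as `A`-`B`-bimodules. -/
def DividesAB (B : Subring A) (m n : ℕ) : Prop :=
  ∃ (r : ℕ) (f : Fin r → ((CC B (m+1) : Type u) →ₗ[ℤ] (CC B (n+1) : Type u)))
    (g : Fin r → ((CC B (n+1) : Type u) →ₗ[ℤ] (CC B (m+1) : Type u))),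
    (∀ i, IsABHom B (f i)) ∧ (∀ i, IsABHom B (g i)) ∧
      ∑ i, (g i).comp (f i) = LinearMap.id

/-- `C_{m+1}(A,B)` divides a multiple of `C_{n+1}(A,B)` as `B`-`A`-bimodules. -/
def DividesBA (B : Subring A) (m n : ℕ) : Prop :=
  ∃ (r : ℕ) (f : Fin r → ((CC B (m+1) : Type u) →ₗ[ℤ] (CC B (n+1) : Type u)))
    (g : Fin r → ((CC B (n+1) : Type u) →ₗ[ℤ] (CC B (m+1) : Type u))),
    (∀ i, IsBAHom B (f i)) ∧ (∀ i, IsBAHom B (g i)) ∧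
      ∑ i, (g i).comp (f i) = LinearMap.id

/-- H-equivalence of `C_m` and `C_n` as `B`-`B`-bimodules. -/
def HequivBB (B : Subring A) (m n : ℕ) : Prop := DividesBB B m n ∧ DividesBB B n m

/-- H-equivalence of `C_{m+1}` and `C_{n+1}` as `A`-`B`-bimodules. -/
def HequivAB (B : Subring A) (m n : ℕ) : Prop := DividesAB B m n ∧ DividesAB B n m

/-- H-equivalence of `C_{m+1}` and `C_{n+1}` as `B`-`A`-bimodules. -/
def HequivBA (B : Subring A) (m n : ℕ) : Prop := DividesBA B m n ∧ DividesBA B n m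

/-- The extension `B ⊆ A` has depth `d`: depth `2n+1` (`n ≥ 0`) means
`C_{n+1} ∼ C_n` as `B`-`B`-bimodules, and right (resp. left) depth `2n` (`n ≥ 1`)
means `C_{n+1} ∼ C_n` as `A`-`B`- (resp. `B`-`A`-) bimodules. -/
def HasDepth (B : Subring A) (d : ℕ) : Prop :=
  (∃ n : ℕ, d = 2 * n + 1 ∧ HequivBB B (n+1) n) ∨
  (∃ n : ℕ, d = 2 * (n+1) ∧ (HequivAB B (n+1) n ∨ HequivBA B (n+1) n))

/-- The minimum depth `d(B,A) ∈ ℕ∞` of the subring extension `B ⊆ A`. -/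
noncomputable def depth (B : Subring A) : ℕ∞ :=
  sInf {d : ℕ∞ | ∃ m : ℕ, HasDepth B m ∧ d = (m : ℕ∞)}

section KadisonYoung
open MulOpposite
variable {K : Type u} [Field K] {A : Type u} [Ring A] [Algebra K A]
variable (B : Subalgebra K A) (ρ : A →ₐ[K] K)

/-- `B⁺·A` as a `K`-submodule of `A`. -/
noncomputable def Jr : Submodule K A :=
  Submodule.span K {x : A | ∃ s a : A, s ∈ B ∧ ρ s = 0 ∧ x = s * a}

/-- `A·B⁺` as a `K`-submodule of `A`. -/
noncomputable def Jl : Submodule K A :=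
  Submodule.span K {x : A | ∃ s a : A, s ∈ B ∧ ρ s = 0 ∧ x = a * s}

theorem Jr_le {x : A} (hx : x ∈ Jr B ρ) :
    x ∈ Submodule.span Aᵐᵒᵖ {x : A | x ∈ B ∧ ρ x = 0} := by
  induction hx using Submodule.span_induction with
  | mem x hx =>
      obtain ⟨s, a, hs, hρ, rfl⟩ := hx
      rw [← op_smul_eq_mul]
      exact Submodule.smul_mem _ _ (Submodule.subset_span ⟨hs, hρ⟩)
  | zero => exact zero_mem _
  | add x y _ _ hx hy => exact add_mem hx hy
  | smul k x _ hx =>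
      rw [Algebra.smul_def, Algebra.commutes, ← op_smul_eq_mul]
      exact Submodule.smul_mem _ _ hx

theorem Jl_le {x : A} (hx : x ∈ Jl B ρ) :
    x ∈ Submodule.span A {x : A | x ∈ B ∧ ρ x = 0} := by
  induction hx using Submodule.span_induction with
  | mem x hx =>
      obtain ⟨s, a, hs, hρ, rfl⟩ := hx
      rw [← smul_eq_mul]
      exact Submodule.smul_mem _ _ (Submodule.subset_span ⟨hs, hρ⟩)
  | zero => exact zero_mem _
  | add x y _ _ hx hy => exact add_mem hx hy
  | smul k x _ hx =>
      rw [Algebra.smul_def, ← smul_eq_mul]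
      exact Submodule.smul_mem _ _ hx

/-- `a ⊗ t ↦ ρ a • t` on `A ⊗ℤ A`, with values in `A ⧸ B⁺A`. -/
noncomputable def Phi0r : (A ⊗[ℤ] A) →ₗ[ℤ] (A ⧸ Jr B ρ) :=
  TensorProduct.lift (LinearMap.mk₂ ℤ
    (fun a t => ρ a • (Submodule.Quotient.mk t : A ⧸ Jr B ρ))
    (fun a a' t => by rw [map_add, add_smul])
    (fun c a t => by rw [map_zsmul, smul_assoc])
    (fun a t t' => by rw [Submodule.Quotient.mk_add, smul_add])
    (fun c a t => by rw [Submodule.Quotient.mk_smul, smul_comm]))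

/-- `a ⊗ t ↦ ρ t • a` on `A ⊗ℤ A`, with values in `A ⧸ A·B⁺`. -/
noncomputable def Phi0l : (A ⊗[ℤ] A) →ₗ[ℤ] (A ⧸ Jl B ρ) :=
  TensorProduct.lift (LinearMap.mk₂ ℤ
    (fun a t => ρ t • (Submodule.Quotient.mk a : A ⧸ Jl B ρ))
    (fun a a' t => by rw [Submodule.Quotient.mk_add, smul_add])
    (fun c a t => by rw [Submodule.Quotient.mk_smul, smul_comm])
    (fun a t t' => by rw [map_add, add_smul])
    (fun c a t => by rw [map_zsmul, smul_assoc]))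

theorem Phi0r_tmul (a t : A) :
    Phi0r B ρ (a ⊗ₜ[ℤ] t) = ρ a • (Submodule.Quotient.mk t : A ⧸ Jr B ρ) := rfl

theorem Phi0l_tmul (a t : A) :
    Phi0l B ρ (a ⊗ₜ[ℤ] t) = ρ t • (Submodule.Quotient.mk a : A ⧸ Jl B ρ) := rfl

theorem gen_r (a bb t : A) (hb : bb ∈ B) :
    Phi0r B ρ ((a * bb) ⊗ₜ[ℤ] t - a ⊗ₜ[ℤ] (bb * t)) = 0 := by
  have key : ρ bb • t - bb * t ∈ Jr B ρ := by
    have hBmem : bb - ρ bb • (1:A) ∈ B := sub_mem hb (B.smul_mem B.one_mem _)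
    have hmem : (bb - ρ bb • (1:A)) * t ∈ Jr B ρ :=
      Submodule.subset_span ⟨bb - ρ bb • (1:A), t, hBmem, by simp, rfl⟩
    have hrw : ρ bb • t - bb * t = -((bb - ρ bb • (1:A)) * t) := by
      rw [sub_mul, smul_mul_assoc, one_mul, neg_sub]
    rw [hrw]; exact neg_mem hmem
  rw [map_sub, Phi0r_tmul, Phi0r_tmul, map_mul, mul_smul, ← smul_sub,
    ← Submodule.Quotient.mk_smul, ← Submodule.Quotient.mk_sub,
    (Submodule.Quotient.mk_eq_zero _).2 key, smul_zero]

theorem gen_l (a bb t : A) (hb : bb ∈ B) :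
    Phi0l B ρ ((a * bb) ⊗ₜ[ℤ] t - a ⊗ₜ[ℤ] (bb * t)) = 0 := by
  have key : a * bb - ρ bb • a ∈ Jl B ρ := by
    have hBmem : bb - ρ bb • (1:A) ∈ B := sub_mem hb (B.smul_mem B.one_mem _)
    have hmem : a * (bb - ρ bb • (1:A)) ∈ Jl B ρ :=
      Submodule.subset_span ⟨bb - ρ bb • (1:A), a, hBmem, by simp, rfl⟩
    have hrw : a * bb - ρ bb • a = a * (bb - ρ bb • (1:A)) := by
      rw [mul_sub, mul_smul_comm, mul_one]
    rw [hrw]; exact hmem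
  rw [map_sub, Phi0l_tmul, Phi0l_tmul, map_mul, mul_comm, mul_smul, ← smul_sub,
    ← Submodule.Quotient.mk_smul, ← Submodule.Quotient.mk_sub,
    (Submodule.Quotient.mk_eq_zero _).2 key, smul_zero]

theorem rel_le_ker_r : rel B.toSubring 1 ≤ LinearMap.ker (Phi0r B ρ) := by
  rw [rel_succ]; refine Submodule.span_le.2 ?_
  rintro x (⟨a, b, t, rfl⟩ | ⟨a, r, hr, rfl⟩)
  · exact gen_r B ρ a (b : A) t (Subalgebra.mem_toSubring.mp b.2)
  · have hr0 : r = 0 := by simpa [rel] using hr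
    subst hr0
    exact (by simp : (a ⊗ₜ[ℤ] (0:A) : A ⊗[ℤ] A) = 0) ▸ zero_mem _

theorem rel_le_ker_l : rel B.toSubring 1 ≤ LinearMap.ker (Phi0l B ρ) := by
  rw [rel_succ]; refine Submodule.span_le.2 ?_
  rintro x (⟨a, b, t, rfl⟩ | ⟨a, r, hr, rfl⟩)
  · exact gen_l B ρ a (b : A) t (Subalgebra.mem_toSubring.mp b.2)
  · have hr0 : r = 0 := by simpa [rel] using hr
    subst hr0
    exact (by simp : (a ⊗ₜ[ℤ] (0:A) : A ⊗[ℤ] A) = 0) ▸ zero_mem _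

/-- The induced map `C₂(A,B) → A ⧸ B⁺A`. -/
noncomputable def Phir : (CC B.toSubring 2 : Type u) →ₗ[ℤ] A ⧸ Jr B ρ :=
  Submodule.liftQ _ (Phi0r B ρ) (rel_le_ker_r B ρ)

/-- The induced map `C₂(A,B) → A ⧸ AB⁺`. -/
noncomputable def Phil : (CC B.toSubring 2 : Type u) →ₗ[ℤ] A ⧸ Jl B ρ :=
  Submodule.liftQ _ (Phi0l B ρ) (rel_le_ker_l B ρ)

theorem Phir_mk (t : A ⊗[ℤ] A) :
    Phir B ρ (Submodule.Quotient.mk t) = Phi0r B ρ t := rfl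

theorem Phil_mk (t : A ⊗[ℤ] A) :
    Phil B ρ (Submodule.Quotient.mk t) = Phi0l B ρ t := rfl

theorem lA_zero_mk (d e : A) :
    lA B.toSubring d 0 (Submodule.Quotient.mk e) =
      (Submodule.Quotient.mk (d * e) : (CC B.toSubring 1 : Type u)) := rfl

theorem rA_zero_mk (d e : A) :
    rA B.toSubring d 0 (Submodule.Quotient.mk e) =
      (Submodule.Quotient.mk (e * d) : (CC B.toSubring 1 : Type u)) := rfl

theorem Phi0r_lmul (d : A) (t : A ⊗[ℤ] A) :
    Phi0r B ρ (lmulT A d 1 t) = ρ d • Phi0r B ρ t := by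
  induction t using TensorProduct.induction_on with
  | zero => erw [map_zero]; exact (smul_zero _).symm
  | tmul a s =>
      have h1 : lmulT A d 1 (a ⊗ₜ[ℤ] s) = (d * a) ⊗ₜ[ℤ] s := by
        rfl
      erw [h1]; rw [Phi0r_tmul, Phi0r_tmul, map_mul, mul_smul]
  | add y z hy hz => erw [map_add, map_add, map_add, hy, hz, smul_add]

theorem Phi0l_rmul (d : A) (t : A ⊗[ℤ] A) :
    Phi0l B ρ (rmulT A d 1 t) = ρ d • Phi0l B ρ t := by
  induction t using TensorProduct.induction_on with
  | zero => erw [map_zero]; exact (smul_zero _).symm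
  | tmul a s =>
      have h1 : rmulT A d 1 (a ⊗ₜ[ℤ] s) = a ⊗ₜ[ℤ] (s * d) := by
        rfl
      erw [h1]; rw [Phi0l_tmul, Phi0l_tmul, map_mul, mul_comm, mul_smul]
  | add y z hy hz => erw [map_add, map_add, map_add, hy, hz, smul_add]

theorem Phir_lA (d : A) (w : (CC B.toSubring 2 : Type u)) :
    Phir B ρ (lA B.toSubring d 1 w) = ρ d • Phir B ρ w := by
  obtain ⟨t, rfl⟩ := Submodule.Quotient.mk_surjective _ w
  have h0 : lA B.toSubring d 1 (Submodule.Quotient.mk t) =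
      Submodule.Quotient.mk (lmulT A d 1 t) := rfl
  rw [h0]; exact Phi0r_lmul B ρ d t

theorem Phil_rA (d : A) (w : (CC B.toSubring 2 : Type u)) :
    Phil B ρ (rA B.toSubring d 1 w) = ρ d • Phil B ρ w := by
  obtain ⟨t, rfl⟩ := Submodule.Quotient.mk_surjective _ w
  have h0 : rA B.toSubring d 1 (Submodule.Quotient.mk t) =
      Submodule.Quotient.mk (rmulT A d 1 t) := rfl
  rw [h0]; exact Phi0l_rmul B ρ d t

theorem key_r (h : DividesAB B.toSubring 1 0) {c b : A} (hb : b ∈ B) (hρb : ρ b = 0) :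
    c * b ∈ Jr B ρ := by
  obtain ⟨r, f, g, hf, hg, hsum⟩ := h
  have hgl : ∀ (i : Fin r) (e : A),
      Phir B ρ (g i (Submodule.Quotient.mk e)) =
        ρ e • Phir B ρ (g i (Submodule.Quotient.mk (1:A))) := by
    intro i e
    have h1 : (Submodule.Quotient.mk e : (CC B.toSubring 1 : Type u)) =
        lA B.toSubring e 0 (Submodule.Quotient.mk (1:A)) := by rw [lA_zero_mk, mul_one]
    rw [h1]; exact (congrArg (Phir B ρ) ((hg i).1 e _)).trans (Phir_lA B ρ e _)
  have hrep : ∀ i : Fin r, ∃ d : A,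
      (Submodule.Quotient.mk (d : (Tpow A 0 : Type u)) : (CC B.toSubring 1 : Type u)) =
        f i (Submodule.Quotient.mk ((1:A) ⊗ₜ[ℤ] c)) :=
    fun i => Submodule.Quotient.mk_surjective (rel B.toSubring 0) _
  choose d hd using hrep
  set b' : B.toSubring := ⟨b, Subalgebra.mem_toSubring.mpr hb⟩ with hb'
  set x : (CC B.toSubring 2 : Type u) := Submodule.Quotient.mk ((1:A) ⊗ₜ[ℤ] (c * b)) with hxdef
  have hx : x = rB B.toSubring b' 2 (Submodule.Quotient.mk ((1:A) ⊗ₜ[ℤ] c)) := rfl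
  have hfix : ∀ i, f i x = Submodule.Quotient.mk (d i * b) := by
    intro i
    rw [hx]
    exact ((hf i).2 b' _).trans ((congrArg (rB B.toSubring b' 1) (hd i).symm).trans
      (rA_zero_mk B (b : A) (d i)))
  have hPhix : Phir B ρ x = Submodule.Quotient.mk (c * b) := by
    rw [hxdef]; exact (by rw [Phi0r_tmul, map_one, one_smul] : Phi0r B ρ ((1:A) ⊗ₜ[ℤ] (c * b)) = _)
  have hid : (Submodule.Quotient.mk (c * b) : A ⧸ Jr B ρ) = 0 := by
    calc (Submodule.Quotient.mk (c * b) : A ⧸ Jr B ρ) = Phir B ρ x := hPhix.symm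
      _ = Phir B ρ ((∑ i, (g i).comp (f i)) x) := by rw [hsum]; rfl
      _ = ∑ i, Phir B ρ (g i (f i x)) := by
          rw [LinearMap.sum_apply, map_sum]
          rfl
      _ = ∑ i, ρ (d i * b) • Phir B ρ (g i (Submodule.Quotient.mk (1:A))) := by
          refine Finset.sum_congr rfl fun i _ => ?_
          rw [hfix i]; exact hgl i (d i * b)
      _ = 0 := by
          simp [map_mul, hρb]
  exact (Submodule.Quotient.mk_eq_zero _).1 hid

theorem key_l (h : DividesBA B.toSubring 1 0) {c b : A} (hb : b ∈ B) (hρb : ρ b = 0) :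
    b * c ∈ Jl B ρ := by
  obtain ⟨r, f, g, hf, hg, hsum⟩ := h
  have hgl : ∀ (i : Fin r) (e : A),
      Phil B ρ (g i (Submodule.Quotient.mk e)) =
        ρ e • Phil B ρ (g i (Submodule.Quotient.mk (1:A))) := by
    intro i e
    have h1 : (Submodule.Quotient.mk e : (CC B.toSubring 1 : Type u)) =
        rA B.toSubring e 0 (Submodule.Quotient.mk (1:A)) := by rw [rA_zero_mk, one_mul]
    rw [h1]; exact (congrArg (Phil B ρ) ((hg i).2 e _)).trans (Phil_rA B ρ e _)
  have hrep : ∀ i : Fin r, ∃ d : A,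
      (Submodule.Quotient.mk (d : (Tpow A 0 : Type u)) : (CC B.toSubring 1 : Type u)) =
        f i (Submodule.Quotient.mk (c ⊗ₜ[ℤ] (1:A))) :=
    fun i => Submodule.Quotient.mk_surjective (rel B.toSubring 0) _
  choose d hd using hrep
  set b' : B.toSubring := ⟨b, Subalgebra.mem_toSubring.mpr hb⟩ with hb'
  set x : (CC B.toSubring 2 : Type u) := Submodule.Quotient.mk ((b * c) ⊗ₜ[ℤ] (1:A)) with hxdef
  have hx : x = lB B.toSubring b' 2 (Submodule.Quotient.mk (c ⊗ₜ[ℤ] (1:A))) := rfl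
  have hfix : ∀ i, f i x = Submodule.Quotient.mk (b * d i) := by
    intro i
    rw [hx]
    exact ((hf i).1 b' _).trans ((congrArg (lB B.toSubring b' 1) (hd i).symm).trans
      (lA_zero_mk B (b : A) (d i)))
  have hPhix : Phil B ρ x = Submodule.Quotient.mk (b * c) := by
    rw [hxdef]; exact (by rw [Phi0l_tmul, map_one, one_smul] : Phi0l B ρ ((b * c) ⊗ₜ[ℤ] (1:A)) = _)
  have hid : (Submodule.Quotient.mk (b * c) : A ⧸ Jl B ρ) = 0 := by
    calc (Submodule.Quotient.mk (b * c) : A ⧸ Jl B ρ) = Phil B ρ x := hPhix.symm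
      _ = Phil B ρ ((∑ i, (g i).comp (f i)) x) := by rw [hsum]; rfl
      _ = ∑ i, Phil B ρ (g i (f i x)) := by
          rw [LinearMap.sum_apply, map_sum]
          rfl
      _ = ∑ i, ρ (b * d i) • Phil B ρ (g i (Submodule.Quotient.mk (1:A))) := by
          refine Finset.sum_congr rfl fun i _ => ?_
          rw [hfix i]; exact hgl i (b * d i)
      _ = 0 := by
          simp [map_mul, hρb]
  exact (Submodule.Quotient.mk_eq_zero _).1 hid

end KadisonYoung
/-- Let `A` be a `K`-algebra with augmentations `ρ 1, …, ρ n : A → K`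
and `B ⊆ A` a subalgebra; write `B_i^+ = ker (ρ i) ∩ B`.  If `B ⊆ A` has right depth 2
(`A ⊗_B A ∼ A` as `A`-`B`-bimodules), then `A·B_i^+ ⊆ B_i^+·A` for each `i`; if it has
left depth 2 (`A ⊗_B A ∼ A` as `B`-`A`-bimodules), then `B_i^+·A ⊆ A·B_i^+` for each `i`.
Here `A·B_i^+` is the left ideal (the `A`-span) and `B_i^+·A` the right ideal
(the `Aᵐᵒᵖ`-span) generated by `B_i^+`. -/
theorem depth_two_augmentation_ideals
    (K : Type u) [Field K] (A : Type u) [Ring A] [Algebra K A] (B : Subalgebra K A)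
    (n : ℕ) (ρ : Fin n → (A →ₐ[K] K)) :
    (HequivAB B.toSubring 1 0 →
      ∀ i : Fin n,
        ((Submodule.span A {x : A | x ∈ B ∧ ρ i x = 0} : Submodule A A) : Set A) ⊆
        ((Submodule.span Aᵐᵒᵖ {x : A | x ∈ B ∧ ρ i x = 0} : Submodule Aᵐᵒᵖ A) : Set A)) ∧
    (HequivBA B.toSubring 1 0 →
      ∀ i : Fin n,
        ((Submodule.span Aᵐᵒᵖ {x : A | x ∈ B ∧ ρ i x = 0} : Submodule Aᵐᵒᵖ A) : Set A) ⊆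
        ((Submodule.span A {x : A | x ∈ B ∧ ρ i x = 0} : Submodule A A) : Set A)) := by
  constructor
  · intro h i x hx
    have hx' : x ∈ Submodule.span A {x : A | x ∈ B ∧ ρ i x = 0} := hx
    obtain ⟨m, cf, cg, hsum⟩ := Submodule.mem_span_set'.1 hx'
    show x ∈ Submodule.span Aᵐᵒᵖ {x : A | x ∈ B ∧ ρ i x = 0}
    rw [← hsum]
    refine Submodule.sum_mem _ fun j _ => ?_
    obtain ⟨hb, hρ⟩ := (cg j).2
    rw [smul_eq_mul]
    exact Jr_le B (ρ i) (key_r B (ρ i) h.1 hb hρ)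
  · intro h i x hx
    have hx' : x ∈ Submodule.span Aᵐᵒᵖ {x : A | x ∈ B ∧ ρ i x = 0} := hx
    obtain ⟨m, cf, cg, hsum⟩ := Submodule.mem_span_set'.1 hx'
    show x ∈ Submodule.span A {x : A | x ∈ B ∧ ρ i x = 0}
    rw [← hsum]
    refine Submodule.sum_mem _ fun j _ => ?_
    obtain ⟨hb, hρ⟩ := (cg j).2
    rw [MulOpposite.smul_eq_mul_unop]
    exact Jl_le B (ρ i) (key_l B (ρ i) h.1 hb hρ)
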